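/- Let X ∈ R^{n×r} have orthogonal columns x₁,…,x_r, and let σ_r = min_s ‖x_s‖² > 0 and σ₁ = max_s ‖x_s‖². Let X̄ = XO for some O ∈ O(r), H ∈ R^{n×r}, and let a ~ N(0, I_n) be a standard Gaussian vector. Then σ_r ‖H‖_F² + tr²(Hᵀ X̄) + tr(Hᵀ X̄ Hᵀ X̄) ≤ E[(aᵀ H X̄ᵀ a)²] ≤ σ₁ ‖H‖_F² + tr²(Hᵀ X̄) + tr(Hᵀ X̄ Hᵀ X̄). -/

import Mathlib

open MeasureTheory ProbabilityTheory Matrix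

section Aux
open MeasureTheory ProbabilityTheory Real Set


noncomputable section

-- integrability of |x|^k * exp(-b x^2)
lemma integrable_abs_pow_exp {b : ℝ} (hb : 0 < b) (k : ℕ) :
    Integrable (fun x : ℝ => |x| ^ k * Real.exp (-b * x ^ 2)) := by
  have h1 : IntegrableOn (fun x : ℝ => |x| ^ k * Real.exp (-b * x ^ 2)) (Ioi 0) := by
    refine ((integrableOn_rpow_mul_exp_neg_mul_sq hb (s := k) (by exact lt_of_lt_of_le neg_one_lt_zero (Nat.cast_nonneg k))).congr_fun
      (fun x hx => ?_) measurableSet_Ioi)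
    beta_reduce; rw [Real.rpow_natCast, abs_of_pos hx]
  have h2 : IntegrableOn (fun x : ℝ => |x| ^ k * Real.exp (-b * x ^ 2)) (Iic 0) := by
    rw [← Measure.map_neg_eq_self (volume : Measure ℝ)]
    have m : MeasurableEmbedding fun x : ℝ => -x := (Homeomorph.neg ℝ).measurableEmbedding
    rw [m.integrableOn_map_iff]
    simp only [Function.comp_def, abs_neg, neg_sq, neg_preimage, neg_Iic, neg_zero]
    exact (integrableOn_Ici_iff_integrableOn_Ioi).mpr h1
  have := h2.union h1
  rwa [Iic_union_Ioi, integrableOn_univ] at this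

lemma integrable_pow_exp {b : ℝ} (hb : 0 < b) (k : ℕ) :
    Integrable (fun x : ℝ => x ^ k * Real.exp (-b * x ^ 2)) := by
  refine (integrable_abs_pow_exp hb k).mono' ?_ ?_
  · exact ((continuous_pow k).mul (Real.continuous_exp.comp (by fun_prop))).aestronglyMeasurable
  · filter_upwards with x
    rw [Real.norm_eq_abs, abs_mul, abs_pow, Real.abs_exp]

end
noncomputable section
open Real

def momJ (k : ℕ) : ℝ := ∫ x : ℝ, x ^ k * Real.exp (-(2⁻¹ : ℝ) * x ^ 2)

lemma J_zero : momJ 0 = Real.sqrt (2 * π) := by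
  have := integral_gaussian (2⁻¹ : ℝ)
  simp only [momJ, pow_zero, one_mul]
  rw [this]
  congr 1
  rw [div_eq_mul_inv, inv_inv, mul_comm]

lemma J_odd (k : ℕ) (hk : Odd k) : momJ k = 0 := by
  have h : momJ k = - momJ k := by
    calc momJ k = ∫ x : ℝ, (-x) ^ k * Real.exp (-(2⁻¹ : ℝ) * (-x) ^ 2) := by
          rw [momJ, ← integral_neg_eq_self]
      _ = - momJ k := by
          rw [momJ, ← integral_neg]
          congr 1; funext x
          rw [hk.neg_pow, neg_sq]; ring
  linarith

lemma J_rec (k : ℕ) : momJ (k + 2) = (k + 1) * momJ k := by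
  have hderiv : ∀ x : ℝ, HasDerivAt (fun x : ℝ => -(x ^ (k+1) * Real.exp (-(2⁻¹:ℝ) * x ^ 2)))
      (x ^ (k+2) * Real.exp (-(2⁻¹:ℝ) * x ^ 2) - (k+1) * (x ^ k * Real.exp (-(2⁻¹:ℝ) * x ^ 2))) x := by
    intro x
    have h1 : HasDerivAt (fun x : ℝ => x ^ (k+1)) ((k+1) * x ^ k) x := by
      simpa using hasDerivAt_pow (k+1) x
    have h2 : HasDerivAt (fun x : ℝ => Real.exp (-(2⁻¹:ℝ) * x ^ 2)) ((-(2⁻¹:ℝ) * (2 * x)) * Real.exp (-(2⁻¹:ℝ) * x ^ 2)) x := by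
      have hx : HasDerivAt (fun x : ℝ => -(2⁻¹:ℝ) * x ^ 2) (-(2⁻¹:ℝ) * (2 * x)) x := by
        simpa using (hasDerivAt_pow 2 x).const_mul (-(2⁻¹:ℝ))
      convert hx.exp using 1
      ring
    have := (h1.mul h2).neg
    refine this.congr_deriv ?_
    push_cast
    ring
  have hint : Integrable (fun x : ℝ => x ^ (k+2) * Real.exp (-(2⁻¹:ℝ) * x ^ 2)
      - (k+1) * (x ^ k * Real.exp (-(2⁻¹:ℝ) * x ^ 2))) :=
    (integrable_pow_exp (by norm_num) (k+2)).sub ((integrable_pow_exp (by norm_num) k).const_mul _)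
  have htend : ∀ F : Filter ℝ, F ≤ Filter.cocompact ℝ →
      Filter.Tendsto (fun x : ℝ => -(x ^ (k+1) * Real.exp (-(2⁻¹:ℝ) * x ^ 2))) F (nhds 0) := by
    intro F hF
    have h0 : Filter.Tendsto (fun x : ℝ => |x| ^ ((k+1:ℕ):ℝ) * Real.exp (-(2⁻¹:ℝ) * x ^ 2))
        (Filter.cocompact ℝ) (nhds 0) :=
      tendsto_rpow_abs_mul_exp_neg_mul_sq_cocompact (by norm_num) _
    rw [← neg_zero]
    refine Filter.Tendsto.neg ?_
    apply squeeze_zero_norm (fun x => ?_) ((h0.comp (le_refl _)).mono_left hF)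
    simp only [Function.comp]
    rw [norm_mul, Real.norm_eq_abs, Real.norm_eq_abs, abs_pow, Real.abs_exp,
      Real.rpow_natCast]
  have h0 := integral_of_hasDerivAt_of_tendsto hderiv hint
    (htend _ _root_.atBot_le_cocompact) (htend _ _root_.atTop_le_cocompact)
  rw [sub_zero] at h0
  have h1 : ∫ x : ℝ, (x ^ (k+2) * Real.exp (-(2⁻¹:ℝ) * x ^ 2)
      - (k+1) * (x ^ k * Real.exp (-(2⁻¹:ℝ) * x ^ 2))) = momJ (k+2) - (k+1) * momJ k := by
    rw [integral_sub (integrable_pow_exp (by norm_num) (k+2))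
      ((integrable_pow_exp (by norm_num) k).const_mul _), integral_const_mul]
    rfl
  rw [h1] at h0
  linarith

end
noncomputable section
open Real
open scoped ENNReal NNReal

lemma gaussianReal_eq_withDensity' :
    gaussianReal 0 1 = (volume : Measure ℝ).withDensity
      (fun x => ((gaussianPDFReal 0 1 x).toNNReal : ℝ≥0∞)) := by
  rw [gaussianReal_of_var_ne_zero 0 one_ne_zero]
  rfl

lemma pdf_meas : Measurable (fun x => (gaussianPDFReal 0 1 x).toNNReal) :=
  (measurable_gaussianPDFReal 0 1).real_toNNReal

lemma integral_gaussianReal_eq (f : ℝ → ℝ) :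
    ∫ x, f x ∂(gaussianReal 0 1) = ∫ x, gaussianPDFReal 0 1 x * f x := by
  rw [gaussianReal_eq_withDensity', integral_withDensity_eq_integral_smul pdf_meas]
  congr 1
  funext x
  rw [NNReal.smul_def, Real.coe_toNNReal _ (gaussianPDFReal_nonneg 0 1 x), smul_eq_mul]

lemma integrable_gaussianReal_iff (f : ℝ → ℝ) :
    Integrable f (gaussianReal 0 1) ↔ Integrable (fun x => gaussianPDFReal 0 1 x * f x) := by
  rw [gaussianReal_eq_withDensity', integrable_withDensity_iff_integrable_smul pdf_meas]
  constructor <;> intro h <;> refine h.congr ?_ <;> filter_upwards with x <;>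
    rw [NNReal.smul_def, Real.coe_toNNReal _ (gaussianPDFReal_nonneg 0 1 x), smul_eq_mul]

lemma gaussianPDFReal_zero_one (x : ℝ) :
    gaussianPDFReal 0 1 x = (Real.sqrt (2 * π))⁻¹ * Real.exp (-(2⁻¹:ℝ) * x ^ 2) := by
  rw [gaussianPDFReal_def]
  push_cast
  norm_num
  left
  ring

lemma integrable_pow_gaussianReal (k : ℕ) :
    Integrable (fun x : ℝ => x ^ k) (gaussianReal 0 1) := by
  rw [integrable_gaussianReal_iff]
  refine ((integrable_pow_exp (by norm_num : (0:ℝ) < 2⁻¹) k).const_mul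
    ((Real.sqrt (2 * π))⁻¹)).congr ?_
  filter_upwards with x
  rw [gaussianPDFReal_zero_one]
  ring

def gmom (k : ℕ) : ℝ := ∫ x, x ^ k ∂(gaussianReal 0 1)

lemma g_eq (k : ℕ) : gmom k = (Real.sqrt (2 * π))⁻¹ * momJ k := by
  rw [gmom, integral_gaussianReal_eq, momJ, ← integral_const_mul]
  congr 1
  funext x
  rw [gaussianPDFReal_zero_one]
  ring

lemma sqrt_two_pi_pos : (0:ℝ) < Real.sqrt (2 * π) := Real.sqrt_pos.mpr (by positivity)

lemma g_zero : gmom 0 = 1 := by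
  rw [g_eq, J_zero, inv_mul_cancel₀ (ne_of_gt sqrt_two_pi_pos)]

lemma g_one : gmom 1 = 0 := by rw [g_eq, J_odd 1 ⟨0, by norm_num⟩, mul_zero]

lemma g_two : gmom 2 = 1 := by
  have := J_rec 0
  rw [g_eq]
  rw [show (2:ℕ) = 0 + 2 from rfl, this, J_zero]
  push_cast
  rw [zero_add, one_mul, inv_mul_cancel₀ (ne_of_gt sqrt_two_pi_pos)]

lemma g_three : gmom 3 = 0 := by rw [g_eq, J_odd 3 ⟨1, by norm_num⟩, mul_zero]

lemma g_four : gmom 4 = 3 := by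
  have h2 := J_rec 2
  have h0 := J_rec 0
  rw [g_eq]
  rw [show (4:ℕ) = 2 + 2 from rfl, h2, show momJ 2 = momJ (0 + 2) from rfl, h0, J_zero]
  push_cast
  rw [zero_add, one_mul]
  rw [← mul_assoc]
  rw [show ((2:ℝ)+1) = 3 by norm_num]
  field_simp

end
noncomputable section
open Real

variable {n : ℕ}

lemma integral_pi_prod (f : Fin n → ℝ → ℝ) (hf : ∀ i, Integrable (f i) (gaussianReal 0 1)) :
    ∫ a : Fin n → ℝ, ∏ i, f i (a i) ∂(Measure.pi fun _ : Fin n => gaussianReal 0 1)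
      = ∏ i, ∫ x, f i x ∂(gaussianReal 0 1) := by
  letI : MeasureSpace ℝ := ⟨gaussianReal 0 1⟩
  haveI : SigmaFinite (volume : Measure ℝ) :=
    @IsFiniteMeasure.toSigmaFinite _ _ _ (by exact inferInstanceAs (IsFiniteMeasure (gaussianReal 0 1)))
  exact MeasureTheory.integral_fin_nat_prod_eq_prod f

lemma integrable_pi_prod (f : Fin n → ℝ → ℝ) (hf : ∀ i, Integrable (f i) (gaussianReal 0 1)) :
    Integrable (fun a : Fin n → ℝ => ∏ i, f i (a i))
      (Measure.pi fun _ : Fin n => gaussianReal 0 1) := by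
  letI : MeasureSpace ℝ := ⟨gaussianReal 0 1⟩
  haveI : SigmaFinite (volume : Measure ℝ) :=
    @IsFiniteMeasure.toSigmaFinite _ _ _ (by exact inferInstanceAs (IsFiniteMeasure (gaussianReal 0 1)))
  exact MeasureTheory.Integrable.fin_nat_prod hf

end
noncomputable section
open Real

variable {n : ℕ}

def e4 (i j k l m : Fin n) : ℕ :=
  (if i = m then 1 else 0) + (if j = m then 1 else 0)
    + (if k = m then 1 else 0) + (if l = m then 1 else 0)

lemma four_eq_prod (i j k l : Fin n) (a : Fin n → ℝ) :
    a i * a j * a k * a l = ∏ m, (a m) ^ (e4 i j k l m) := by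
  have key : ∀ t : Fin n, (∏ m, (a m) ^ (if t = m then 1 else 0)) = a t := by
    intro t
    have h : ∀ m, (a m) ^ (if t = m then 1 else 0) = (if t = m then a m else 1) := by
      intro m; split <;> simp
    simp only [h, Finset.prod_ite_eq, Finset.mem_univ, if_true]
  simp only [e4, pow_add, Finset.prod_mul_distrib, key]

lemma integrable_four (i j k l : Fin n) :
    Integrable (fun a : Fin n → ℝ => a i * a j * a k * a l)
      (Measure.pi fun _ : Fin n => gaussianReal 0 1) := by
  have := integrable_pi_prod (fun m x => x ^ (e4 i j k l m))
    (fun m => integrable_pow_gaussianReal _)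
  refine this.congr ?_
  filter_upwards with a
  rw [← four_eq_prod]

lemma moment_four (i j k l : Fin n) :
    ∫ a : Fin n → ℝ, a i * a j * a k * a l ∂(Measure.pi fun _ : Fin n => gaussianReal 0 1)
      = (if i = j then (1:ℝ) else 0) * (if k = l then 1 else 0)
        + (if i = k then 1 else 0) * (if j = l then 1 else 0)
        + (if i = l then 1 else 0) * (if j = k then 1 else 0) := by
  have base : ∫ a : Fin n → ℝ, a i * a j * a k * a l
      ∂(Measure.pi fun _ : Fin n => gaussianReal 0 1) = ∏ m, gmom (e4 i j k l m) := by
    rw [show (fun a : Fin n → ℝ => a i * a j * a k * a l)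
        = fun a => ∏ m, (a m) ^ (e4 i j k l m) from funext (four_eq_prod i j k l)]
    exact integral_pi_prod _ (fun m => integrable_pow_gaussianReal _)
  rw [base]
  -- case analysis
  by_cases hij : i = j
  · subst hij
    by_cases hik : i = k
    · subst hik
      by_cases hil : i = l
      · subst hil
        simp only [if_pos rfl]
        norm_num
        calc ∏ m, gmom (e4 i i i i m) = ∏ m, (if i = m then (3:ℝ) else 1) := by
              refine Finset.prod_congr rfl (fun m _ => ?_)
              by_cases h : i = m <;> simp [e4, h, g_four, g_zero]
          _ = 3 := by rw [Finset.prod_ite_eq]; simp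
      · -- i = j = k ≠ l
        rw [Finset.prod_eq_zero (Finset.mem_univ l)
          (by simp [e4, (Ne.symm hil : l ≠ i), hil, g_one, g_three])]
        simp [hil]
    · by_cases hkl : k = l
      · subst hkl
        -- i = j, k = l, i ≠ k
        have h1 : ∀ m, gmom (e4 i i k k m) = 1 := by
          intro m
          by_cases h : i = m
          · subst h; simp [e4, hik, Ne.symm hik, g_two]
          · by_cases h' : k = m
            · subst h'; simp [e4, h, g_two]
            · simp [e4, h, h', g_zero]
        rw [Finset.prod_congr rfl (fun m _ => h1 m), Finset.prod_const_one]
        simp [hik]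
      · by_cases hil : i = l
        · subst hil
          -- i = j = l ≠ k
          rw [Finset.prod_eq_zero (Finset.mem_univ k)
            (by simp [e4, (Ne.symm hik : k ≠ i), hik, g_one, g_three])]
          simp [hik, hkl, Ne.symm hik]
        · -- i = j, and k,l distinct from i and each other
          rw [Finset.prod_eq_zero (Finset.mem_univ k)
            (by simp [e4, hik, (Ne.symm hik : k ≠ i), (Ne.symm hkl : l ≠ k), g_one])]
          simp [hik, hkl, hil]
  · by_cases hkl : k = l
    · subst hkl
      by_cases hik : i = k
      · subst hik
        rw [Finset.prod_eq_zero (Finset.mem_univ j)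
          (by simp [e4, (Ne.symm hij : j ≠ i), hij, g_one, g_three])]
        simp [hij, Ne.symm hij]
      · by_cases hjk : j = k
        · subst hjk
          rw [Finset.prod_eq_zero (Finset.mem_univ i)
            (by simp [e4, (Ne.symm hij : j ≠ i), g_one])]
          simp [hij, hik]
        · rw [Finset.prod_eq_zero (Finset.mem_univ i)
            (by simp [e4, (Ne.symm hij : j ≠ i), (Ne.symm hik : k ≠ i), g_one])]
          simp [hij, hik, hjk]
    · by_cases hik : i = k
      · subst hik
        by_cases hjl : j = l
        · subst hjl
          -- i = k, j = l, i ≠ j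
          have h1 : ∀ m, gmom (e4 i j i j m) = 1 := by
            intro m
            by_cases h : i = m
            · subst h; simp [e4, (Ne.symm hij : j ≠ i), g_two]
            · by_cases h' : j = m
              · subst h'; simp [e4, h, g_two]
              · simp [e4, h, h', g_zero]
          rw [Finset.prod_congr rfl (fun m _ => h1 m), Finset.prod_const_one]
          simp [hij, hkl]
        · rw [Finset.prod_eq_zero (Finset.mem_univ l)
            (by simp [e4, hkl, hjl, g_one])]
          simp [hij, hkl, hjl]
      · by_cases hil : i = l
        · subst hil
          by_cases hjk : j = k
          · subst hjk
            have h1 : ∀ m, gmom (e4 i j j i m) = 1 := by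
              intro m
              by_cases h : i = m
              · subst h; simp [e4, (Ne.symm hij : j ≠ i), g_two]
              · by_cases h' : j = m
                · subst h'; simp [e4, h, g_two]
                · simp [e4, h, h', g_zero]
            rw [Finset.prod_congr rfl (fun m _ => h1 m), Finset.prod_const_one]
            simp [hij, hkl, Ne.symm hij]
          · rw [Finset.prod_eq_zero (Finset.mem_univ j)
              (by simp [e4, hij, (Ne.symm hjk : k ≠ j), g_one])]
            simp [hij, hkl, hjk, Ne.symm hij]
        · rw [Finset.prod_eq_zero (Finset.mem_univ i)
            (by simp [e4, (Ne.symm hij : j ≠ i), (Ne.symm hik : k ≠ i), (Ne.symm hil : l ≠ i), g_one])]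
          simp [hij, hik, hil]

end
noncomputable section
open Real

variable {n : ℕ}

lemma integral_quad (M : Matrix (Fin n) (Fin n) ℝ) :
    ∫ a : Fin n → ℝ, (∑ i, ∑ j, a i * M i j * a j) ^ 2
        ∂(Measure.pi fun _ : Fin n => gaussianReal 0 1)
      = (∑ i, M i i) ^ 2 + (∑ i, ∑ j, M i j * M i j) + (∑ i, ∑ j, M i j * M j i) := by
  have expand : ∀ a : Fin n → ℝ, (∑ i, ∑ j, a i * M i j * a j) ^ 2
      = ∑ p : (Fin n × Fin n) × (Fin n × Fin n),
          (M p.1.1 p.1.2 * M p.2.1 p.2.2) * (a p.1.1 * a p.1.2 * a p.2.1 * a p.2.2) := by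
    intro a
    rw [sq]
    have h1 : (∑ i, ∑ j, a i * M i j * a j)
        = ∑ p : Fin n × Fin n, a p.1 * M p.1 p.2 * a p.2 := (Fintype.sum_prod_type (f := fun p : Fin n × Fin n => a p.1 * M p.1 p.2 * a p.2)).symm
    rw [h1, Finset.sum_mul_sum, ← Fintype.sum_prod_type (f := fun z : (Fin n × Fin n) × (Fin n × Fin n) =>
      a z.1.1 * M z.1.1 z.1.2 * a z.1.2 * (a z.2.1 * M z.2.1 z.2.2 * a z.2.2))]
    exact Finset.sum_congr rfl (fun p _ => by ring)
  simp_rw [expand]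
  rw [integral_finset_sum _ (fun p _ => (integrable_four p.1.1 p.1.2 p.2.1 p.2.2).const_mul _)]
  have step : ∀ p : (Fin n × Fin n) × (Fin n × Fin n),
      ∫ a : Fin n → ℝ, (M p.1.1 p.1.2 * M p.2.1 p.2.2) * (a p.1.1 * a p.1.2 * a p.2.1 * a p.2.2)
        ∂(Measure.pi fun _ : Fin n => gaussianReal 0 1)
      = (M p.1.1 p.1.2 * M p.2.1 p.2.2) * ((if p.1.1 = p.1.2 then (1:ℝ) else 0) * (if p.2.1 = p.2.2 then 1 else 0))
        + (M p.1.1 p.1.2 * M p.2.1 p.2.2) * ((if p.1.1 = p.2.1 then 1 else 0) * (if p.1.2 = p.2.2 then 1 else 0))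
        + (M p.1.1 p.1.2 * M p.2.1 p.2.2) * ((if p.1.1 = p.2.2 then 1 else 0) * (if p.1.2 = p.2.1 then 1 else 0)) := by
    intro p
    rw [integral_const_mul, moment_four]
    ring
  rw [Finset.sum_congr rfl (fun p _ => step p), Finset.sum_add_distrib, Finset.sum_add_distrib]
  have T1 : ∑ p : (Fin n × Fin n) × (Fin n × Fin n),
      (M p.1.1 p.1.2 * M p.2.1 p.2.2) * ((if p.1.1 = p.1.2 then (1:ℝ) else 0) * (if p.2.1 = p.2.2 then 1 else 0))
      = (∑ i, M i i) ^ 2 := by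
    rw [Fintype.sum_prod_type]
    simp_rw [Fintype.sum_prod_type]
    simp only [mul_ite, mul_one, mul_zero, ite_mul, one_mul, zero_mul,
      Finset.sum_ite_eq, Finset.sum_ite_eq', Finset.mem_univ, if_true,
      Finset.sum_ite_irrel, Finset.sum_const_zero]
    rw [sq, Finset.sum_mul_sum]
  have T2 : ∑ p : (Fin n × Fin n) × (Fin n × Fin n),
      (M p.1.1 p.1.2 * M p.2.1 p.2.2) * ((if p.1.1 = p.2.1 then (1:ℝ) else 0) * (if p.1.2 = p.2.2 then 1 else 0))
      = ∑ i, ∑ j, M i j * M i j := by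
    rw [Fintype.sum_prod_type]
    simp_rw [Fintype.sum_prod_type]
    simp only [mul_ite, mul_one, mul_zero, ite_mul, one_mul, zero_mul,
      Finset.sum_ite_eq, Finset.sum_ite_eq', Finset.mem_univ, if_true,
      Finset.sum_ite_irrel, Finset.sum_const_zero]
  have T3 : ∑ p : (Fin n × Fin n) × (Fin n × Fin n),
      (M p.1.1 p.1.2 * M p.2.1 p.2.2) * ((if p.1.1 = p.2.2 then (1:ℝ) else 0) * (if p.1.2 = p.2.1 then 1 else 0))
      = ∑ i, ∑ j, M i j * M j i := by
    rw [Fintype.sum_prod_type]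
    simp_rw [Fintype.sum_prod_type]
    simp only [mul_ite, mul_one, mul_zero, ite_mul, one_mul, zero_mul,
      Finset.sum_ite_eq, Finset.sum_ite_eq', Finset.mem_univ, if_true,
      Finset.sum_ite_irrel, Finset.sum_const_zero]
  rw [T1, T2, T3]

end

end Aux


/-- For `X` with orthogonal columns, `σ_r = min_s ‖x_s‖²`, `σ₁ = max_s ‖x_s‖²`,
`X̄ = XO` with `O` orthogonal, `H ∈ R^{n×r}` and `a ~ N(0,I_n)`:
`σ_r‖H‖_F² + tr²(HᵀX̄) + tr(HᵀX̄HᵀX̄) ≤ E[(aᵀHX̄ᵀa)²] ≤ σ₁‖H‖_F² + tr²(HᵀX̄) + tr(HᵀX̄HᵀX̄)`. -/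
theorem expectation_cross_quadratic_bounds (n r : ℕ) (X : Matrix (Fin n) (Fin r) ℝ)
    (horth : ∀ s t : Fin r, s ≠ t → ∑ i, X i s * X i t = 0)
    (σr σ1 : ℝ) (hpos : 0 < σr)
    (hσr : IsLeast (Set.range fun s : Fin r => ∑ i, (X i s) ^ 2) σr)
    (hσ1 : IsGreatest (Set.range fun s : Fin r => ∑ i, (X i s) ^ 2) σ1)
    (O : Matrix (Fin r) (Fin r) ℝ) (hO : O * Oᵀ = 1)
    (H : Matrix (Fin n) (Fin r) ℝ) :
    σr * (∑ i, ∑ j, (H i j) ^ 2) + (Matrix.trace (Hᵀ * (X * O))) ^ 2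
        + Matrix.trace (Hᵀ * (X * O) * (Hᵀ * (X * O)))
      ≤ (∫ a : Fin n → ℝ, (∑ i, ∑ j, a i * (H * (X * O)ᵀ) i j * a j) ^ 2
          ∂(Measure.pi fun _ : Fin n => gaussianReal 0 1)) ∧
    (∫ a : Fin n → ℝ, (∑ i, ∑ j, a i * (H * (X * O)ᵀ) i j * a j) ^ 2
          ∂(Measure.pi fun _ : Fin n => gaussianReal 0 1))
      ≤ σ1 * (∑ i, ∑ j, (H i j) ^ 2) + (Matrix.trace (Hᵀ * (X * O))) ^ 2
        + Matrix.trace (Hᵀ * (X * O) * (Hᵀ * (X * O))) := by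
  set Y : Matrix (Fin n) (Fin r) ℝ := X * O with hY
  set M : Matrix (Fin n) (Fin n) ℝ := H * Yᵀ with hM
  set K : Matrix (Fin n) (Fin r) ℝ := H * Oᵀ with hK
  have hO' : Oᵀ * O = 1 := mul_eq_one_comm.mp hO
  -- trace identities
  have h1 : (∑ i, M i i) = Matrix.trace (Hᵀ * Y) := by
    have e1 : Mᵀ = Y * Hᵀ := by rw [hM, Matrix.transpose_mul, Matrix.transpose_transpose]
    have e2 : Matrix.trace M = Matrix.trace Mᵀ := (Matrix.trace_transpose M).symm
    have e3 : Matrix.trace (Y * Hᵀ) = Matrix.trace (Hᵀ * Y) := Matrix.trace_mul_comm _ _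
    rw [← e3, ← e1, ← e2]
    rfl
  have h2 : (∑ i, ∑ j, M i j * M j i) = Matrix.trace (Hᵀ * Y * (Hᵀ * Y)) := by
    have e0 : (∑ i, ∑ j, M i j * M j i) = Matrix.trace (M * M) := by
      simp [Matrix.trace, Matrix.mul_apply, Matrix.diag]
    have e1 : Matrix.trace (M * M) = Matrix.trace (Yᵀ * H * (Yᵀ * H)) := by
      rw [hM, Matrix.mul_assoc, Matrix.trace_mul_comm]
      congr 1
      simp [Matrix.mul_assoc]
    have e2 : Matrix.trace (Hᵀ * Y * (Hᵀ * Y)) = Matrix.trace (Yᵀ * H * (Yᵀ * H)) := by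
      rw [← Matrix.trace_transpose (Hᵀ * Y * (Hᵀ * Y))]
      congr 1
      simp [Matrix.transpose_mul, Matrix.mul_assoc]
    rw [e0, e1, ← e2]
  -- the Frobenius part
  have hDiag : ∀ u v : Fin r, (Xᵀ * X) u v
      = if u = v then (∑ i, (X i u) ^ 2) else 0 := by
    intro u v
    by_cases h : u = v
    · subst h
      simp [Matrix.mul_apply, Matrix.transpose_apply, sq]
    · simp [Matrix.mul_apply, Matrix.transpose_apply, h]
      exact horth u v h
  have hMMt : M * Mᵀ = K * (Xᵀ * X) * Kᵀ := by
    rw [hM, hK, hY]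
    simp [Matrix.transpose_mul, Matrix.mul_assoc]
  have hS2 : (∑ i, ∑ j, M i j * M i j)
      = ∑ u, (∑ s, (X s u) ^ 2) * (∑ i, K i u * K i u) := by
    have e0 : (∑ i, ∑ j, M i j * M i j) = Matrix.trace (M * Mᵀ) := by
      simp [Matrix.trace, Matrix.mul_apply, Matrix.diag, Matrix.transpose_apply]
    have e1 : Matrix.trace (K * (Xᵀ * X) * Kᵀ) = Matrix.trace ((Kᵀ * K) * (Xᵀ * X)) := by
      rw [Matrix.trace_mul_comm, ← Matrix.mul_assoc]
    have e2 : Matrix.trace ((Kᵀ * K) * (Xᵀ * X)) = ∑ u, (∑ s, (X s u) ^ 2) * (∑ i, K i u * K i u) := by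
      simp only [Matrix.trace, Matrix.diag, Matrix.mul_apply, Matrix.transpose_apply]
      refine Finset.sum_congr rfl (fun u _ => ?_)
      have : ∀ v, (Xᵀ * X) v u = if v = u then (∑ i, (X i u) ^ 2) else 0 := by
        intro v
        rw [hDiag]
        by_cases h : v = u
        · subst h; simp
        · simp [h]
      simp only [Matrix.mul_apply, Matrix.transpose_apply] at this
      simp_rw [this]
      simp only [mul_ite, mul_zero, Finset.sum_ite_eq, Finset.sum_ite_eq', Finset.mem_univ, if_true]
      ring
    rw [e0, hMMt, e1, e2]
  have hW : ∑ u, (∑ i, K i u * K i u) = ∑ i, ∑ j, (H i j) ^ 2 := by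
    rw [Finset.sum_comm]
    refine Finset.sum_congr rfl (fun i _ => ?_)
    have hKi : ∀ u, K i u = ∑ s, H i s * O u s := by
      intro u
      simp [hK, Matrix.mul_apply, Matrix.transpose_apply]
    have hOuv : ∀ s t : Fin r, (∑ u, O u s * O u t) = if s = t then (1:ℝ) else 0 := by
      intro s t
      have := congrFun (congrFun hO' s) t
      simp only [Matrix.mul_apply, Matrix.transpose_apply, Matrix.one_apply] at this
      exact this
    calc ∑ u, K i u * K i u
        = ∑ u, ∑ s, ∑ t, (H i s * H i t) * (O u s * O u t) := by
          refine Finset.sum_congr rfl (fun u _ => ?_)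
          rw [hKi, Finset.sum_mul_sum]
          exact Finset.sum_congr rfl (fun s _ => Finset.sum_congr rfl (fun t _ => by ring))
      _ = ∑ s, ∑ t, (H i s * H i t) * (∑ u, O u s * O u t) := by
          rw [Finset.sum_comm]
          refine Finset.sum_congr rfl (fun s _ => ?_)
          rw [Finset.sum_comm]
          refine Finset.sum_congr rfl (fun t _ => ?_)
          rw [Finset.mul_sum]
      _ = ∑ s, (H i s) ^ 2 := by
          simp_rw [hOuv]
          simp only [mul_ite, mul_one, mul_zero, Finset.sum_ite_eq, Finset.mem_univ, if_true, sq]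
  -- positivity of weights and bounds
  have hWnonneg : ∀ u, 0 ≤ ∑ i, K i u * K i u :=
    fun u => Finset.sum_nonneg (fun i _ => mul_self_nonneg _)
  have hlow : σr * (∑ i, ∑ j, (H i j) ^ 2) ≤ ∑ i, ∑ j, M i j * M i j := by
    rw [hS2, ← hW, Finset.mul_sum]
    refine Finset.sum_le_sum (fun u _ => ?_)
    exact mul_le_mul_of_nonneg_right (hσr.2 ⟨u, rfl⟩) (hWnonneg u)
  have hhigh : (∑ i, ∑ j, M i j * M i j) ≤ σ1 * (∑ i, ∑ j, (H i j) ^ 2) := by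
    rw [hS2, ← hW, Finset.mul_sum]
    refine Finset.sum_le_sum (fun u _ => ?_)
    exact mul_le_mul_of_nonneg_right (hσ1.2 ⟨u, rfl⟩) (hWnonneg u)
  have hquad := integral_quad M
  rw [hquad, ← h1, ← h2]
  constructor <;> nlinarith [hlow, hhigh]
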